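/- Let q : V → K be a diagonalizable non-degenerate quadratic form over a field of characteristic 2 with dim_K V odd and finite. Then the similitude group GO(q) equals K^×·id, and every multiplier is a square. -/

import Mathlib

section Aux

variable (K : Type*) [Field K] [CharP K 2]

/-- Frobenius-twisted copy of `K`. -/
def Ktw := K

instance : AddCommGroup (Ktw K) := inferInstanceAs (AddCommGroup K)

instance : Module K (Ktw K) := Module.compHom K (frobenius K 2)

variable {K}

/-- Identity map `K → Ktw K`. -/
def Ktw.mk : K → Ktw K := fun x => x

/-- Identity map `Ktw K → K`. -/
def Ktw.un : Ktw K → K := fun x => x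

lemma Ktw.smul_def (a : K) (x : Ktw K) : a • x = Ktw.mk (a ^ 2 * x.un) := by
  show Ktw.mk (frobenius K 2 a * x.un) = _
  rw [frobenius_def]

lemma Ktw.un_add (x y : Ktw K) : (x + y).un = x.un + y.un := rfl
lemma Ktw.un_mk (x : K) : (Ktw.mk x).un = x := rfl
lemma Ktw.mk_un (x : Ktw K) : Ktw.mk x.un = x := rfl
lemma Ktw.un_zero : (0 : Ktw K).un = 0 := rfl
lemma Ktw.un_injective : Function.Injective (Ktw.un (K := K)) := fun _ _ h => h

/-- Multiplication by `r` as a linear endomorphism of the twisted `K`. -/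
def Ktw.mulr (r : K) : Ktw K →ₗ[K] Ktw K where
  toFun x := Ktw.mk (r * x.un)
  map_add' x y := by
    apply Ktw.un_injective
    rw [Ktw.un_add, Ktw.un_mk, Ktw.un_add, Ktw.un_mk, Ktw.un_mk]
    ring
  map_smul' a x := by
    apply Ktw.un_injective
    simp only [RingHom.id_apply, Ktw.smul_def, Ktw.un_mk]
    ring

lemma Ktw.mulr_apply (r : K) (x : Ktw K) : Ktw.mulr r x = Ktw.mk (r * x.un) := rfl

end Aux

/-- For a diagonalizable anisotropic quadratic form in characteristic 2 on a
space of odd finite dimension, every similitude is a scalar and every multiplier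
is a square. -/
theorem similitudes_odd_dim_char_two {K V : Type*} [Field K] [CharP K 2]
    [AddCommGroup V] [Module K V] [FiniteDimensional K V]
    (hodd : Odd (Module.finrank K V))
    (q : QuadraticForm K V)
    (hdiag : ∀ x y : V, QuadraticMap.polar q x y = 0)
    (haniso : QuadraticMap.Anisotropic q)
    (φ : V ≃ₗ[K] V) (r : K) (hr : r ≠ 0)
    (hsim : ∀ v, q (φ v) = r * q v) :
    ∃ c : K, c ≠ 0 ∧ r = c ^ 2 ∧ ∀ v, φ v = c • v := by
  have hadd : ∀ x y : V, q (x + y) = q x + q y := by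
    intro x y
    have := hdiag x y
    rw [QuadraticMap.polar] at this
    linear_combination this
  -- q as a linear map into the Frobenius twist of K
  let qlin : V →ₗ[K] Ktw K :=
    { toFun := fun v => Ktw.mk (q v)
      map_add' := fun x y => by
        apply Ktw.un_injective
        rw [Ktw.un_add, Ktw.un_mk, Ktw.un_mk, Ktw.un_mk]
        exact hadd x y
      map_smul' := fun a v => by
        apply Ktw.un_injective
        simp only [RingHom.id_apply, Ktw.smul_def, Ktw.un_mk]
        rw [QuadraticMap.map_smul, smul_eq_mul]
        ring }
  have hinj : Function.Injective qlin := by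
    rw [← LinearMap.ker_eq_bot, LinearMap.ker_eq_bot']
    intro v hv
    exact haniso v (by rw [← Ktw.un_zero]; exact congrArg Ktw.un hv)
  set W := LinearMap.range qlin with hW
  let eV : V ≃ₗ[K] W := LinearEquiv.ofInjective qlin hinj
  have hfin : FiniteDimensional K W := Module.Finite.equiv eV
  have hrank : Module.finrank K W = Module.finrank K V := (eV.finrank_eq).symm
  -- multiplication by r as an endomorphism of W
  have hmem : ∀ w ∈ W, Ktw.mulr r w ∈ W := by
    rintro w ⟨v, rfl⟩
    refine ⟨φ v, ?_⟩
    apply Ktw.un_injective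
    show q (φ v) = (Ktw.mk (r * Ktw.un (Ktw.mk (q v)))).un
    rw [Ktw.un_mk, Ktw.un_mk]
    exact hsim v
  let e : W →ₗ[K] W := (Ktw.mulr r).restrict hmem
  have hee : e ∘ₗ e = r • LinearMap.id := by
    ext w
    show Ktw.mk (r * (Ktw.mk (r * Ktw.un (w : Ktw K))).un) = r • (w : Ktw K)
    rw [Ktw.smul_def, Ktw.un_mk]
    exact congrArg Ktw.mk (by ring)
  have hdet : LinearMap.det e * LinearMap.det e = r ^ Module.finrank K V := by
    rw [← LinearMap.det_comp, hee, LinearMap.det_smul, LinearMap.det_id, mul_one, hrank]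
  obtain ⟨k, hk⟩ := hodd
  have hrk : r ^ k ≠ 0 := pow_ne_zero k hr
  set c : K := LinearMap.det e / r ^ k with hc
  have hdete : LinearMap.det e ≠ 0 := by
    intro h
    rw [h, mul_zero] at hdet
    exact (pow_ne_zero _ hr) hdet.symm
  have hcne : c ≠ 0 := div_ne_zero hdete hrk
  rw [hk] at hdet
  have hc2 : r = c ^ 2 := by
    rw [hc, div_pow, eq_div_iff (pow_ne_zero 2 hrk)]
    linear_combination -hdet
  refine ⟨c, hcne, hc2, fun v => ?_⟩
  have hq0 : q (φ v + c • v) = 0 := by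
    rw [hadd, hsim, QuadraticMap.map_smul, smul_eq_mul, ← pow_two, ← hc2]
    exact CharTwo.add_self_eq_zero _
  have h0 : φ v + c • v = 0 := haniso _ hq0
  have h2 : c • v + c • v = 0 := by
    rw [← add_smul, CharTwo.add_self_eq_zero, zero_smul]
  calc φ v = φ v + (c • v + c • v) := by rw [h2, add_zero]
    _ = (φ v + c • v) + c • v := by abel
    _ = c • v := by rw [h0, zero_add]
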